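/- arXiv:1003.4839 — 2 statements merged into one kernel-verified Lean document; each statement's English description precedes it below -/
import Mathlib

section
/- Let ρ: [0,∞) → [0,∞) be a log-concave function and suppose ν(dr) = r^{n-1} ρ(r) 1_{[0,∞)}(r) dr is a probability measure on [0,∞). Then the variance of the identity function r under ν satisfies Var_ν(r) ≤ E_ν(r²)/n. -/
open MeasureTheory Set

/-- `ρ` is log-concave on `[0,∞)`. -/
def LogConcaveOnIci (ρ : ℝ → ℝ) : Prop :=
  ∀ ⦃x : ℝ⦄, x ∈ Ici (0:ℝ) → ∀ ⦃y : ℝ⦄, y ∈ Ici (0:ℝ) →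
    ∀ ⦃a b : ℝ⦄, 0 ≤ a → 0 ≤ b → a + b = 1 →
      Real.rpow (ρ x) a * Real.rpow (ρ y) b ≤ ρ (a * x + b * y)

noncomputable def rbar (ρ : ℝ → ℝ) : ℝ → ℝ := fun r => if 0 ≤ r then ρ r else 0

lemma rbar_nonneg (ρ : ℝ → ℝ) (hρ : ∀ r, 0 ≤ ρ r) (r : ℝ) : 0 ≤ rbar ρ r := by
  unfold rbar; split <;> simp [hρ r]

lemma rbar_of_nonneg (ρ : ℝ → ℝ) {r : ℝ} (h : 0 ≤ r) : rbar ρ r = ρ r := if_pos h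

lemma rbar_of_neg (ρ : ℝ → ℝ) {r : ℝ} (h : r < 0) : rbar ρ r = 0 := if_neg (not_le.mpr h)

lemma rbar_aemeasurable (ρ : ℝ → ℝ) (hρ : ∀ r, 0 ≤ ρ r) (hlc : LogConcaveOnIci ρ) :
    AEMeasurable (rbar ρ) (volume : Measure ℝ) := by
  set S : Set ℝ := {x | 0 ≤ x ∧ 0 < ρ x} with hS
  have hSconv : Convex ℝ S := by
    intro x hx y hy a b ha hb hab
    have hxy : (0:ℝ) ≤ a * x + b * y :=
      add_nonneg (mul_nonneg ha hx.1) (mul_nonneg hb hy.1)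
    constructor
    · simpa [smul_eq_mul] using hxy
    · have h := hlc hx.1 hy.1 ha hb hab
      have hpos : 0 < Real.rpow (ρ x) a * Real.rpow (ρ y) b :=
        mul_pos (Real.rpow_pos_of_pos hx.2 a) (Real.rpow_pos_of_pos hy.2 b)
      simpa [smul_eq_mul] using lt_of_lt_of_le hpos h
  have hSm : MeasurableSet S := hSconv.ordConnected.measurableSet
  have hbar_ind : rbar ρ = S.indicator ρ := by
    funext x
    by_cases hx : x ∈ S
    · rw [indicator_of_mem hx, rbar_of_nonneg ρ hx.1]
    · rw [indicator_of_notMem hx]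
      rcases le_or_gt 0 x with h0 | h0
      · rw [rbar_of_nonneg ρ h0]
        by_contra hne
        exact hx ⟨h0, lt_of_le_of_ne (hρ x) (Ne.symm hne)⟩
      · exact rbar_of_neg ρ h0
  rw [hbar_ind, aemeasurable_indicator_iff hSm]
  -- concavity of log ∘ ρ on S
  have hconc : ConcaveOn ℝ S (fun x => Real.log (ρ x)) := by
    refine ⟨hSconv, ?_⟩
    intro x hx y hy a b ha hb hab
    have h := hlc hx.1 hy.1 ha hb hab
    have hpos : 0 < Real.rpow (ρ x) a * Real.rpow (ρ y) b :=
      mul_pos (Real.rpow_pos_of_pos hx.2 a) (Real.rpow_pos_of_pos hy.2 b)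
    have hlog : Real.log (Real.rpow (ρ x) a * Real.rpow (ρ y) b) ≤ Real.log (ρ (a*x+b*y)) :=
      Real.log_le_log hpos h
    simp only [show ∀ (u v : ℝ), Real.rpow u v = u ^ v from fun _ _ => rfl] at hlog
    rw [Real.log_mul (ne_of_gt (Real.rpow_pos_of_pos hx.2 a))
        (ne_of_gt (Real.rpow_pos_of_pos hy.2 b)), Real.log_rpow hx.2, Real.log_rpow hy.2] at hlog
    simpa [smul_eq_mul] using hlog
  have hcont : ContinuousOn ρ (interior S) := by
    have h1 : ContinuousOn (fun x => Real.exp (Real.log (ρ x))) (interior S) :=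
      Real.continuous_exp.comp_continuousOn hconc.continuousOn_interior
    refine h1.congr fun x hx => ?_
    exact (Real.exp_log (interior_subset hx).2).symm
  have hnull : volume (S \ interior S) = 0 := by
    have hsub : S \ interior S ⊆ (S ∩ lowerBounds S) ∪ (S ∩ upperBounds S) := by
      rintro x ⟨hxS, hxI⟩
      by_contra hcon
      rw [mem_union, not_or] at hcon
      obtain ⟨h1, h2⟩ := hcon
      simp only [mem_inter_iff, hxS, true_and, lowerBounds, upperBounds, mem_setOf_eq] at h1 h2
      push_neg at h1 h2
      obtain ⟨y1, hy1S, hy1⟩ := h1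
      obtain ⟨y2, hy2S, hy2⟩ := h2
      have hIoo : Ioo y1 y2 ⊆ S :=
        Set.Ioo_subset_Icc_self.trans (hSconv.ordConnected.out hy1S hy2S)
      exact hxI (interior_maximal hIoo isOpen_Ioo ⟨hy1, hy2⟩)
    refine measure_mono_null hsub (measure_union_null ?_ ?_)
    · refine Set.Countable.measure_zero ?_ _
      refine Set.Subsingleton.countable ?_
      rintro a ⟨haS, ha⟩ b ⟨hbS, hb⟩
      exact le_antisymm (ha hbS) (hb haS)
    · refine Set.Countable.measure_zero ?_ _
      refine Set.Subsingleton.countable ?_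
      rintro a ⟨haS, ha⟩ b ⟨hbS, hb⟩
      exact le_antisymm (hb haS) (ha hbS)
  have h1 : AEMeasurable ρ (volume.restrict (interior S)) :=
    hcont.aemeasurable isOpen_interior.measurableSet
  have h2 : AEMeasurable ρ (volume.restrict (S \ interior S)) := by
    rw [Measure.restrict_eq_zero.mpr hnull]
    exact aemeasurable_zero_measure
  have h3 : AEMeasurable ρ (volume.restrict (interior S ∪ (S \ interior S))) :=
    aemeasurable_union_iff.mpr ⟨h1, h2⟩
  exact h3.mono_measure (Measure.restrict_mono (fun x hx => by
    by_cases h : x ∈ interior S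
    · exact Or.inl h
    · exact Or.inr ⟨hx, h⟩) le_rfl)

lemma G_anti (ρ : ℝ → ℝ) (hρ : ∀ r, 0 ≤ ρ r) (hlc : LogConcaveOnIci ρ)
    {m t₁ t₂ : ℝ} (hm : 0 ≤ m) (ht₁ : 0 ≤ t₁) (h12 : t₁ ≤ t₂) :
    rbar ρ (m - t₂) * rbar ρ (m + t₂) ≤ rbar ρ (m - t₁) * rbar ρ (m + t₁) := by
  have hb1 : 0 ≤ rbar ρ (m - t₁) := rbar_nonneg ρ hρ _
  have hb2 : 0 ≤ rbar ρ (m + t₁) := rbar_nonneg ρ hρ _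
  rcases lt_or_ge m t₂ with hc | hc
  · rw [rbar_of_neg ρ (by linarith), zero_mul]
    exact mul_nonneg hb1 hb2
  rcases eq_or_lt_of_le h12 with rfl | hlt
  · exact le_refl _
  have ht₂ : 0 < t₂ := lt_of_le_of_lt ht₁ hlt
  -- all four points nonneg
  have hx : (0:ℝ) ≤ m - t₂ := by linarith
  have hy : (0:ℝ) ≤ m + t₂ := by linarith
  have hx' : (0:ℝ) ≤ m - t₁ := by linarith
  have hy' : (0:ℝ) ≤ m + t₁ := by linarith
  set a : ℝ := (t₂ + t₁) / (2 * t₂) with ha_def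
  set b : ℝ := (t₂ - t₁) / (2 * t₂) with hb_def
  have ha : 0 ≤ a := by positivity
  have hb : 0 ≤ b := by
    apply div_nonneg (by linarith) (by linarith)
  have hab : a + b = 1 := by
    rw [ha_def, hb_def, ← add_div, show t₂ + t₁ + (t₂ - t₁) = 2 * t₂ by ring]
    field_simp
  have e1 : a * (m - t₂) + b * (m + t₂) = m - t₁ := by
    rw [ha_def, hb_def]; field_simp; ring
  have e2 : b * (m - t₂) + a * (m + t₂) = m + t₁ := by
    rw [ha_def, hb_def]; field_simp; ring
  have h1 := hlc (mem_Ici.mpr hx) (mem_Ici.mpr hy) ha hb hab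
  have h2 := hlc (mem_Ici.mpr hx) (mem_Ici.mpr hy) hb ha (by linarith)
  rw [e1] at h1
  rw [e2] at h2
  simp only [show ∀ (u v : ℝ), Real.rpow u v = u ^ v from fun _ _ => rfl] at h1 h2
  rw [rbar_of_nonneg ρ hx, rbar_of_nonneg ρ hy, rbar_of_nonneg ρ hx', rbar_of_nonneg ρ hy']
  have key : ρ (m - t₂) * ρ (m + t₂)
      = (ρ (m - t₂) ^ a * ρ (m + t₂) ^ b) * (ρ (m - t₂) ^ b * ρ (m + t₂) ^ a) := by
    rw [show (ρ (m - t₂) ^ a * ρ (m + t₂) ^ b) * (ρ (m - t₂) ^ b * ρ (m + t₂) ^ a)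
        = (ρ (m - t₂) ^ a * ρ (m - t₂) ^ b) * (ρ (m + t₂) ^ a * ρ (m + t₂) ^ b) by ring,
      ← Real.rpow_add' (hρ _) (by rw [hab]; exact one_ne_zero),
      ← Real.rpow_add' (hρ _) (by rw [hab]; exact one_ne_zero), hab,
      Real.rpow_one, Real.rpow_one]
  rw [key]
  exact mul_le_mul h1 h2
    (mul_nonneg (Real.rpow_nonneg (hρ _) _) (Real.rpow_nonneg (hρ _) _)) (hρ _)

noncomputable def Pker (p : ℕ) (r s : ℝ) : ℝ :=
  2*((p:ℝ)+1)*(r*s)^(p+1) - p*(r^p*s^(p+2) + r^(p+2)*s^p)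

noncomputable def Fker (p : ℕ) (ρ : ℝ → ℝ) (z : ℝ × ℝ) : ℝ :=
  Pker p z.1 z.2 * (rbar ρ z.1 * rbar ρ z.2)

lemma Pker_diag (p : ℕ) (m t : ℝ) :
    Pker p (m - t) (m + t) = 2*(m^2-t^2)^p*(m^2-(2*p+1)*t^2) := by
  unfold Pker
  rw [show (m:ℝ)^2 - t^2 = (m-t)*(m+t) by ring, mul_pow, mul_pow]
  ring

lemma phi_boundary (p : ℕ) (m t : ℝ) (ht : t^2 = m^2) :
    2*(m^2-t^2)^p*(m^2-(2*(p:ℝ)+1)*t^2) = 0 := by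
  rcases Nat.eq_zero_or_pos p with hp | hp
  · subst hp; push_cast; rw [ht]; ring
  · rw [ht, sub_self, zero_pow hp.ne', mul_zero, zero_mul]

lemma inner_nonneg (p : ℕ) (ρ : ℝ → ℝ) (hρ : ∀ r, 0 ≤ ρ r) (hlc : LogConcaveOnIci ρ)
    (m : ℝ) : 0 ≤ ∫ t : ℝ, Fker p ρ (m - t, m + t) := by
  rcases lt_or_ge m 0 with hm | hm
  · have hz : (fun t : ℝ => Fker p ρ (m - t, m + t)) = fun _ => 0 := by
      funext t
      rcases le_or_gt 0 t with ht | ht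
      · rw [Fker, show rbar ρ (m - t, m + t).1 = 0 from rbar_of_neg ρ (by simp; linarith)]
        ring
      · rw [Fker, show rbar ρ (m - t, m + t).2 = 0 from rbar_of_neg ρ (by simp; linarith)]
        ring
    rw [hz, integral_zero]
  -- main case
  set φ : ℝ → ℝ := fun t => 2*(m^2-t^2)^p*(m^2-(2*(p:ℝ)+1)*t^2) with hφ_def
  set G : ℝ → ℝ := fun t => rbar ρ (m - t) * rbar ρ (m + t) with hG_def
  have hFG : ∀ t, Fker p ρ (m - t, m + t) = φ t * G t := by
    intro t
    rw [Fker, hφ_def, hG_def]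
    simp only
    rw [Pker_diag]
  have hGnn : ∀ t, 0 ≤ G t := fun t => mul_nonneg (rbar_nonneg ρ hρ _) (rbar_nonneg ρ hρ _)
  have hGeven : ∀ t, G (-t) = G t := by
    intro t
    simp only [hG_def, sub_neg_eq_add, mul_comm]
    ring_nf
  have hGabs : ∀ t, G t = G |t| := by
    intro t
    rcases abs_cases t with ⟨h, _⟩ | ⟨h, _⟩
    · rw [h]
    · rw [h, hGeven]
  set c : ℝ := 2*(p:ℝ)+1 with hc_def
  have hp0 : (0:ℝ) ≤ (p:ℝ) := Nat.cast_nonneg p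
  have hc1 : (1:ℝ) ≤ c := by rw [hc_def]; linarith
  have hc0 : (0:ℝ) < c := by linarith
  set t₀ : ℝ := m / Real.sqrt c with ht₀_def
  have hs1 : (1:ℝ) ≤ Real.sqrt c := by
    rw [show (1:ℝ) = Real.sqrt 1 by simp]
    exact Real.sqrt_le_sqrt hc1
  have hs0 : (0:ℝ) < Real.sqrt c := lt_of_lt_of_le one_pos hs1
  have ht₀0 : 0 ≤ t₀ := div_nonneg hm hs0.le
  have ht₀m : t₀ ≤ m := div_le_self hm hs1
  have ht₀sq : c * t₀^2 = m^2 := by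
    rw [ht₀_def, div_pow, Real.sq_sqrt hc0.le]
    field_simp
  set K : ℝ := G t₀ with hK_def
  have hK0 : 0 ≤ K := hGnn t₀
  set ψ : ℝ → ℝ := (Ioc (-m) m).indicator φ with hψ_def
  -- pointwise inequality
  have hpt : ∀ t, K * ψ t ≤ φ t * G t := by
    intro t
    by_cases ht : t ∈ Ioc (-m) m
    · rw [hψ_def, indicator_of_mem ht]
      obtain ⟨htl, htr⟩ := ht
      have htsq : t^2 ≤ m^2 := by nlinarith
      have hmt : (0:ℝ) ≤ (m^2 - t^2)^p := pow_nonneg (by linarith) p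
      rcases le_or_gt (c * t^2) (m^2) with hcase | hcase
      · -- φ t ≥ 0 and G t ≥ K
        have hφnn : 0 ≤ φ t := by
          rw [hφ_def]
          have : 0 ≤ m^2 - c*t^2 := by linarith
          positivity
        have habs : |t| ≤ t₀ := by
          have h2 : t^2 ≤ t₀^2 := by nlinarith
          calc |t| = Real.sqrt (t^2) := (Real.sqrt_sq_eq_abs t).symm
            _ ≤ Real.sqrt (t₀^2) := Real.sqrt_le_sqrt h2
            _ = t₀ := Real.sqrt_sq ht₀0
        have hGK : K ≤ G t := by
          rw [hGabs t, hK_def]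
          exact G_anti ρ hρ hlc hm (abs_nonneg t) habs
        calc K * φ t ≤ G t * φ t := mul_le_mul_of_nonneg_right hGK hφnn
          _ = φ t * G t := mul_comm _ _
      · -- φ t ≤ 0 and G t ≤ K
        have hφnp : φ t ≤ 0 := by
          rw [hφ_def]
          have h1 : m^2 - c*t^2 ≤ 0 := by linarith
          have := mul_nonpos_of_nonneg_of_nonpos (by positivity : (0:ℝ) ≤ 2*(m^2-t^2)^p) h1
          simpa using this
        have habs : t₀ ≤ |t| := by
          have h2 : t₀^2 ≤ t^2 := by nlinarith
          calc t₀ = Real.sqrt (t₀^2) := (Real.sqrt_sq ht₀0).symm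
            _ ≤ Real.sqrt (t^2) := Real.sqrt_le_sqrt h2
            _ = |t| := Real.sqrt_sq_eq_abs t
        have hGK : G t ≤ K := by
          rw [hGabs t, hK_def]
          exact G_anti ρ hρ hlc hm ht₀0 habs
        calc K * φ t ≤ G t * φ t := mul_le_mul_of_nonpos_right hGK hφnp
          _ = φ t * G t := mul_comm _ _
    · rw [hψ_def, indicator_of_notMem ht, mul_zero]
      rw [mem_Ioc, not_and_or] at ht
      push_neg at ht
      rcases ht with ht | ht
      · -- t ≤ -m
        rcases eq_or_lt_of_le ht with rfl | hlt
        · rw [hφ_def]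
          simp only
          rw [phi_boundary p m (-m) (by ring)]
          simp
        · have : rbar ρ (m + t) = 0 := rbar_of_neg ρ (by linarith)
          rw [hG_def]
          simp only [this, mul_zero]
          ring_nf
          exact le_refl _
      · -- m < t
        have : rbar ρ (m - t) = 0 := rbar_of_neg ρ (by linarith)
        rw [hG_def]
        simp only [this, zero_mul, mul_zero]
        exact le_refl _
  have hφcont : Continuous φ := by
    rw [hφ_def]; fun_prop
  have hψint : Integrable ψ (volume : Measure ℝ) := by
    rw [hψ_def, integrable_indicator_iff measurableSet_Ioc]
    exact hφcont.integrableOn_Ioc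
  have hψ0 : 0 ≤ ∫ t, ψ t := by
    rw [hψ_def, integral_indicator measurableSet_Ioc,
      ← intervalIntegral.integral_of_le (by linarith : -m ≤ m)]
    set e : ℝ → ℝ := fun t => 4*t^2*(m^2-t^2)^p with he_def
    have hecont : Continuous e := by rw [he_def]; fun_prop
    have hkey : ∫ t in (-m)..m, (φ t - e t) = 0 := by
      have hderiv : ∀ x ∈ uIcc (-m) m,
          HasDerivAt (fun t : ℝ => 2*t*(m^2-t^2)^(p+1)) (φ x - e x) x := by
        intro x _
        have hg : HasDerivAt (fun t : ℝ => m^2 - t^2) (-(2*x)) x := by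
          simpa using ((hasDerivAt_pow 2 x).const_sub (m^2))
        have hgp : HasDerivAt (fun t : ℝ => (m^2 - t^2)^(p+1))
            (((p:ℝ)+1) * (m^2 - x^2)^p * (-(2*x))) x := by
          have := hg.fun_pow (p+1)
          simpa using this
        have h2t : HasDerivAt (fun t : ℝ => 2*t) 2 x := by
          simpa using (hasDerivAt_id x).const_mul (2:ℝ)
        have : HasDerivAt (fun t : ℝ => 2*t*(m^2-t^2)^(p+1)) _ x := h2t.fun_mul hgp
        convert this using 1
        rw [hφ_def, he_def, hc_def]
        simp only
        rw [show ((m:ℝ)^2 - x^2)^(p+1) = (m^2-x^2)^p * (m^2-x^2) by ring]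
        push_cast
        ring
      have hint : IntervalIntegrable (fun t => φ t - e t) volume (-m) m :=
        (hφcont.sub hecont).intervalIntegrable _ _
      rw [intervalIntegral.integral_eq_sub_of_hasDerivAt hderiv hint]
      rw [show (m^2 - m^2 : ℝ) = 0 by ring]
      rw [show (m^2 - (-m)^2 : ℝ) = 0 by ring]
      rw [zero_pow (Nat.succ_ne_zero p)]
      ring
    have hsplit : ∫ t in (-m)..m, φ t
        = (∫ t in (-m)..m, (φ t - e t)) + ∫ t in (-m)..m, e t := by
      rw [← intervalIntegral.integral_add (f := fun t => φ t - e t) ((hφcont.sub hecont).intervalIntegrable _ _)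
        (hecont.intervalIntegrable _ _)]
      simp
    rw [hsplit, hkey, zero_add]
    apply intervalIntegral.integral_nonneg (by linarith : -m ≤ m)
    intro u hu
    rw [he_def]
    have h1 : u^2 ≤ m^2 := by
      obtain ⟨h1, h2⟩ := hu
      nlinarith
    have : (0:ℝ) ≤ m^2 - u^2 := by linarith
    positivity
  by_cases hgint : Integrable (fun t => Fker p ρ (m - t, m + t)) (volume : Measure ℝ)
  · have h1 : (0:ℝ) ≤ K * ∫ t, ψ t := mul_nonneg hK0 hψ0
    calc (0:ℝ) ≤ K * ∫ t, ψ t := h1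
      _ = ∫ t, K * ψ t := (integral_const_mul K ψ).symm
      _ ≤ ∫ t, Fker p ρ (m - t, m + t) := by
          exact integral_mono (hψint.const_mul K) hgint
            (fun t => (hpt t).trans (le_of_eq (hFG t).symm))
  · rw [integral_undef hgint]

lemma moment_ineq (p : ℕ) (ρ : ℝ → ℝ) (hρ : ∀ r, 0 ≤ ρ r) (hlc : LogConcaveOnIci ρ)
    (hmeas : AEMeasurable (rbar ρ) (volume : Measure ℝ))
    (h0 : Integrable (fun r => r^p * rbar ρ r) (volume : Measure ℝ))
    (h1 : Integrable (fun r => r^(p+1) * rbar ρ r) (volume : Measure ℝ))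
    (h2 : Integrable (fun r => r^(p+2) * rbar ρ r) (volume : Measure ℝ)) :
    (p:ℝ) * ((∫ r, r^p * rbar ρ r) * (∫ r, r^(p+2) * rbar ρ r))
      ≤ ((p:ℝ)+1) * (∫ r, r^(p+1) * rbar ρ r)^2 := by
  set f : ℕ → ℝ → ℝ := fun k r => r^k * rbar ρ r with hf_def
  have hFeq : Fker p ρ = fun z : ℝ × ℝ =>
      2*((p:ℝ)+1) * (f (p+1) z.1 * f (p+1) z.2)
        - ((p:ℝ) * (f p z.1 * f (p+2) z.2) + (p:ℝ) * (f (p+2) z.1 * f p z.2)) := by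
    funext z
    rw [Fker, Pker, hf_def]
    simp only
    ring
  have hint1 : Integrable (fun z : ℝ × ℝ => f (p+1) z.1 * f (p+1) z.2)
      ((volume : Measure ℝ).prod (volume : Measure ℝ)) := h1.mul_prod h1
  have hint2 : Integrable (fun z : ℝ × ℝ => f p z.1 * f (p+2) z.2)
      ((volume : Measure ℝ).prod (volume : Measure ℝ)) := h0.mul_prod h2
  have hint3 : Integrable (fun z : ℝ × ℝ => f (p+2) z.1 * f p z.2)
      ((volume : Measure ℝ).prod (volume : Measure ℝ)) := h2.mul_prod h0
  have hFint : Integrable (Fker p ρ) ((volume : Measure ℝ).prod (volume : Measure ℝ)) := by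
    rw [hFeq]
    exact (hint1.const_mul _).sub ((hint2.const_mul _).add (hint3.const_mul _))
  have hval : ∫ z, Fker p ρ z ∂((volume : Measure ℝ).prod (volume : Measure ℝ))
      = 2*((p:ℝ)+1) * (∫ r, f (p+1) r)^2
        - 2*(p:ℝ) * ((∫ r, f p r) * (∫ r, f (p+2) r)) := by
    have hg2 : Integrable (fun z : ℝ × ℝ => (p:ℝ) * (f p z.1 * f (p+2) z.2))
        ((volume : Measure ℝ).prod (volume : Measure ℝ)) := hint2.const_mul _
    have hg3 : Integrable (fun z : ℝ × ℝ => (p:ℝ) * (f (p+2) z.1 * f p z.2))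
        ((volume : Measure ℝ).prod (volume : Measure ℝ)) := hint3.const_mul _
    have hg23 : Integrable (fun z : ℝ × ℝ => (p:ℝ) * (f p z.1 * f (p+2) z.2)
        + (p:ℝ) * (f (p+2) z.1 * f p z.2))
        ((volume : Measure ℝ).prod (volume : Measure ℝ)) := hg2.add hg3
    rw [hFeq]
    rw [integral_sub (hint1.const_mul _) hg23]
    rw [integral_add hg2 hg3]
    rw [integral_const_mul, integral_const_mul, integral_const_mul]
    rw [integral_prod_mul, integral_prod_mul, integral_prod_mul]
    ring
  have hpos : 0 ≤ ∫ z, Fker p ρ z ∂((volume : Measure ℝ).prod (volume : Measure ℝ)) := by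
    rw [integral_prod _ hFint]
    have step1 : ∀ r : ℝ, ∫ s, Fker p ρ (r, s) = ∫ u, Fker p ρ (r, u - r) := by
      intro r
      exact (integral_sub_right_eq_self (fun u => Fker p ρ (r, u)) r).symm
    simp_rw [step1]
    have hFe : Integrable (fun z : ℝ × ℝ => Fker p ρ (z.1, z.2 - z.1))
        ((volume : Measure ℝ).prod (volume : Measure ℝ)) := by
      have hmp : MeasurePreserving (fun z : ℝ × ℝ => (z.1, z.2 - z.1))
          ((volume : Measure ℝ).prod (volume : Measure ℝ))
          ((volume : Measure ℝ).prod (volume : Measure ℝ)) :=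
        measurePreserving_prod_sub (volume : Measure ℝ) (volume : Measure ℝ)
      exact ((hmp.integrable_comp hFint.aestronglyMeasurable).mpr hFint)
    rw [integral_integral_swap hFe]
    apply integral_nonneg
    intro u
    show (0:ℝ) ≤ ∫ x, Fker p ρ (x, u - x)
    have step2 : ∫ x, Fker p ρ (x, u - x) = ∫ t, Fker p ρ (u/2 - t, u/2 + t) := by
      rw [← integral_sub_left_eq_self (fun x => Fker p ρ (x, u - x)) volume (u/2)]
      congr 1
      funext t
      rw [show u - (u/2 - t) = u/2 + t by ring]
    rw [step2]
    exact inner_nonneg p ρ hρ hlc (u/2)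
  rw [hval] at hpos
  rw [hf_def] at hpos
  simp only at hpos
  nlinarith [hpos]

theorem stmt0 (n : ℕ) (hn : 1 ≤ n) (ρ : ℝ → ℝ) (hρ : ∀ r, 0 ≤ ρ r)
    (hlc : LogConcaveOnIci ρ)
    (ν : Measure ℝ)
    (hν : ν = (volume.restrict (Ici (0:ℝ))).withDensity
      (fun r => ENNReal.ofReal (r ^ (n - 1) * ρ r)))
    (hprob : IsProbabilityMeasure ν)
    (h1 : Integrable (fun r => r) ν)
    (h2 : Integrable (fun r => r ^ 2) ν) :
    (∫ r, r ^ 2 ∂ν) - (∫ r, r ∂ν) ^ 2 ≤ (∫ r, r ^ 2 ∂ν) / n := by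
  obtain ⟨p, rfl⟩ : ∃ p, n = p + 1 := ⟨n - 1, (Nat.succ_pred_eq_of_pos hn).symm⟩
  simp only [Nat.add_sub_cancel] at hν
  set μ0 : Measure ℝ := volume.restrict (Ici 0) with hμ0
  set w : ℝ → ℝ := fun r => r ^ p * ρ r with hw_def
  have hbar : AEMeasurable (rbar ρ) (volume : Measure ℝ) := rbar_aemeasurable ρ hρ hlc
  have hbar0 : AEMeasurable (rbar ρ) μ0 := hbar.restrict
  have hae : ∀ᵐ r ∂μ0, r ∈ Ici (0:ℝ) := ae_restrict_mem measurableSet_Ici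
  have hwae : w =ᵐ[μ0] (fun r => r ^ p * rbar ρ r) := by
    filter_upwards [hae] with r hr
    rw [hw_def]
    simp only
    rw [rbar_of_nonneg ρ hr]
  have hwmeas : AEMeasurable w μ0 :=
    (((measurable_id.pow_const p).aemeasurable.mul hbar0).congr hwae.symm)
  have hdens : AEMeasurable (fun r => (w r).toNNReal) μ0 :=
    measurable_real_toNNReal.comp_aemeasurable hwmeas
  have hν' : ν = μ0.withDensity (fun r => ((Real.toNNReal (w r) : NNReal) : ENNReal)) := by
    rw [hν]; rfl
  -- integral conversion
  have key : ∀ q : ℕ, ∫ r, (r:ℝ)^q ∂ν = ∫ r, r^(p+q) * rbar ρ r := by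
    intro q
    rw [hν', integral_withDensity_eq_integral_smul₀ hdens]
    have e1 : (fun r => (Real.toNNReal (w r)) • (r:ℝ)^q)
        =ᵐ[μ0] (fun r => r^(p+q) * rbar ρ r) := by
      filter_upwards [hae] with r hr
      have hw0 : 0 ≤ w r := mul_nonneg (pow_nonneg hr p) (hρ r)
      rw [NNReal.smul_def, Real.coe_toNNReal _ hw0, hw_def]
      simp only
      rw [rbar_of_nonneg ρ hr, pow_add, smul_eq_mul]
      ring
    rw [integral_congr_ae e1, hμ0]
    rw [← integral_indicator measurableSet_Ici]
    congr 1
    funext r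
    rcases le_or_gt 0 r with hr | hr
    · rw [indicator_of_mem (mem_Ici.mpr hr)]
    · rw [indicator_of_notMem (by simpa using hr)]
      rw [rbar_of_neg ρ hr, mul_zero]
  -- integrability conversion
  have keyint : ∀ q : ℕ, Integrable (fun r => (r:ℝ)^q) ν →
      Integrable (fun r => r^(p+q) * rbar ρ r) (volume : Measure ℝ) := by
    intro q hq
    rw [hν', integrable_withDensity_iff_integrable_coe_smul₀ hdens] at hq
    have e1 : (fun r => ((Real.toNNReal (w r) : NNReal) : ℝ) * (r:ℝ)^q)
        =ᵐ[μ0] (fun r => r^(p+q) * rbar ρ r) := by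
      filter_upwards [hae] with r hr
      have hw0 : 0 ≤ w r := mul_nonneg (pow_nonneg hr p) (hρ r)
      rw [Real.coe_toNNReal _ hw0, hw_def]
      simp only
      rw [rbar_of_nonneg ρ hr, pow_add]
      ring
    have hq2 : Integrable (fun r => r^(p+q) * rbar ρ r) μ0 := by
      refine (hq.congr ?_)
      simpa [NNReal.smul_def] using e1
    rw [hμ0] at hq2
    have hq3 : IntegrableOn (fun r => r^(p+q) * rbar ρ r) (Ici 0) (volume : Measure ℝ) := hq2
    rw [← integrable_indicator_iff measurableSet_Ici] at hq3
    refine hq3.congr (Filter.Eventually.of_forall fun r => ?_)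
    rcases le_or_gt 0 r with hr | hr
    · rw [indicator_of_mem (mem_Ici.mpr hr)]
    · rw [indicator_of_notMem (by simpa using hr)]
      simp [rbar_of_neg ρ hr]
  have hint0 : Integrable (fun r => r^(p+0) * rbar ρ r) (volume : Measure ℝ) :=
    keyint 0 (by simpa using (integrable_const (1:ℝ) : Integrable _ ν))
  have hint1 : Integrable (fun r => r^(p+1) * rbar ρ r) (volume : Measure ℝ) :=
    keyint 1 (by simpa using h1)
  have hint2 : Integrable (fun r => r^(p+2) * rbar ρ r) (volume : Measure ℝ) :=
    keyint 2 h2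
  have hmass : (1:ℝ) = ∫ r, r^(p+0) * rbar ρ r := by
    rw [← key 0]
    simp
  have hB : ∫ r, r ∂ν = ∫ r, r^(p+1) * rbar ρ r := by
    rw [← key 1]
    simp
  have hA : ∫ r, r^2 ∂ν = ∫ r, r^(p+2) * rbar ρ r := by
    rw [← key 2]
  have hmain := moment_ineq p ρ hρ hlc hbar
    (by simpa using hint0) (by simpa using hint1) (by simpa using hint2)
  rw [show p + 0 = p from rfl] at hmass
  rw [← hmass, one_mul, ← hB, ← hA] at hmain
  have hApos : 0 ≤ ∫ r, r^2 ∂ν := integral_nonneg fun r => sq_nonneg r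
  have hnpos : (0:ℝ) < ((p:ℕ):ℝ) + 1 := by positivity
  rw [show (((p+1 : ℕ)):ℝ) = (p:ℝ) + 1 by push_cast; ring]
  rw [le_div_iff₀ hnpos]
  nlinarith [hmain, sq_nonneg (∫ r, r ∂ν)]
end

section
/- Let ρ: [0,∞) → [0,∞) be log-concave and non-increasing with ∫₀^∞ n r^{n-1} ρ(r) dr = 1. Let R have law n r^{n-1} ρ(r) dr on [0,∞), let S have law -s^n ρ'(s) ds on [0,∞), and let T have density n t^{n-1} on [0,1], with S and T independent. Then the product S·T has the same distribution as R. -/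
open MeasureTheory Set Filter

lemma lemA (n : ℕ) (hn : 1 ≤ n) {c : ℝ} (hc : 0 ≤ c) :
    ∫⁻ r in Ioc (0:ℝ) c, ENNReal.ofReal ((n : ℝ) * r ^ (n - 1)) = ENNReal.ofReal (c ^ n) := by
  rw [← ofReal_integral_eq_lintegral_ofReal]
  · congr 1
    rw [← intervalIntegral.integral_of_le hc]
    rw [intervalIntegral.integral_const_mul, integral_pow]
    have : n - 1 + 1 = n := Nat.succ_pred_eq_of_pos hn
    rw [this]
    field_simp
    rw [zero_pow (by omega), sub_zero, Nat.cast_sub hn]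
    push_cast
    ring
  · apply Continuous.integrableOn_Ioc
    continuity
  · filter_upwards [ae_restrict_mem measurableSet_Ioc] with r hr
    have : (0:ℝ) < r := hr.1
    positivity

lemma lemB (n : ℕ) (hn : 1 ≤ n) {c : ℝ} (hc : 0 ≤ c) :
    ((volume.restrict (Icc (0:ℝ) 1)).withDensity
      (fun t => ENNReal.ofReal ((n : ℝ) * t ^ (n - 1)))) (Iic c)
      = ENNReal.ofReal (min c 1 ^ n) := by
  rw [withDensity_apply _ measurableSet_Iic, Measure.restrict_restrict measurableSet_Iic]
  have hset : Iic c ∩ Icc (0:ℝ) 1 = Icc 0 (min c 1) := by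
    ext x; simp [mem_Icc, and_assoc, le_min_iff]; tauto
  rw [hset, ← lemA n hn (le_min hc zero_le_one)]
  refine setLIntegral_congr ?_
  exact (Ioc_ae_eq_Icc (α := ℝ)).symm

lemma lemB' (n : ℕ) (hn : 1 ≤ n) :
    IsProbabilityMeasure ((volume.restrict (Icc (0:ℝ) 1)).withDensity
      (fun t => ENNReal.ofReal ((n : ℝ) * t ^ (n - 1)))) := by
  constructor
  have h1 : (univ : Set ℝ) ∩ Icc (0:ℝ) 1 = Icc 0 1 := univ_inter _
  rw [withDensity_apply _ MeasurableSet.univ, Measure.restrict_restrict MeasurableSet.univ, h1,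
    ← setLIntegral_congr (Ioc_ae_eq_Icc (α := ℝ)), lemA n hn zero_le_one]
  simp

lemma lemC (f : ℝ → ℝ) (hanti : Antitone f) (hf0 : ∀ x, 0 ≤ f x)
    (hfin : ∫⁻ s in Ici (0:ℝ), ENNReal.ofReal (f s) ≠ ⊤) {r : ℝ} (hr : 0 ≤ r) :
    ∫⁻ s in Ici r, ENNReal.ofReal (-(deriv f s)) ≤ ENNReal.ofReal (f r) := by
  have hm : Measurable f := hanti.measurable
  set F : ℝ → ENNReal := fun s => ENNReal.ofReal (f s) with hF
  have hFm : Measurable F := ENNReal.measurable_ofReal.comp hm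
  have hfin' : ∀ a : ℝ, 0 ≤ a → ∫⁻ s in Ici a, F s ≠ ⊤ := by
    intro a ha htop
    exact hfin (eq_top_mono (le_trans htop.symm.le (lintegral_mono_set (Ici_subset_Ici.2 ha))) rfl)
  have key : ∀ h : ℝ, 0 < h → ∫⁻ s in Ici r, (F s - F (s + h)) ≤ F r * ENNReal.ofReal h := by
    intro h hh
    have hshift : ∫⁻ s in Ici r, F (s + h) = ∫⁻ s in Ici (r + h), F s := by
      have hmp : MeasurePreserving (fun x : ℝ => x + h) volume volume :=
        measurePreserving_add_right volume h
      have him : (fun x : ℝ => x + h) '' Ici r = Ici (r + h) := by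
        ext x
        simp only [mem_image, mem_Ici]
        constructor
        · rintro ⟨y, hy, rfl⟩; linarith
        · intro hx; exact ⟨x - h, by linarith, by ring⟩
      have := hmp.setLIntegral_comp_emb (measurableEmbedding_addRight h) F (Ici r)
      rw [this, him]
    have hsplit : ∫⁻ s in Ici r, F s
        = (∫⁻ s in Ico r (r + h), F s) + ∫⁻ s in Ici (r + h), F s := by
      rw [← lintegral_union measurableSet_Ici ((Iio_disjoint_Ici le_rfl).mono_left Ico_subset_Iio_self),
        Ico_union_Ici_eq_Ici (by linarith)]
    have hle : (fun s => F (s + h)) ≤ᵐ[volume.restrict (Ici r)] F := by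
      filter_upwards with s
      exact ENNReal.ofReal_le_ofReal (hanti (by linarith))
    calc ∫⁻ s in Ici r, (F s - F (s + h))
        = (∫⁻ s in Ici r, F s) - ∫⁻ s in Ici r, F (s + h) := by
          refine lintegral_sub (hFm.comp (measurable_add_const h)) ?_ hle
          rw [hshift]; exact hfin' (r + h) (by linarith)
      _ = ∫⁻ s in Ico r (r + h), F s := by
          rw [hshift, hsplit, ENNReal.add_sub_cancel_right (hfin' (r + h) (by linarith))]
      _ ≤ ∫⁻ _ in Ico r (r + h), F r := by
          refine setLIntegral_mono measurable_const fun s hs => ?_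
          exact ENNReal.ofReal_le_ofReal (hanti hs.1)
      _ = F r * ENNReal.ofReal h := by
          rw [setLIntegral_const, Real.volume_Ico, add_sub_cancel_left]
  set q : ℕ → ℝ → ENNReal :=
    fun k s => ENNReal.ofReal ((f s - f (s + ((k:ℝ)+1)⁻¹)) * ((k:ℝ)+1)) with hq
  have hqm : ∀ k, Measurable (q k) := by
    intro k
    exact ENNReal.measurable_ofReal.comp
      ((hm.sub (hm.comp (measurable_add_const _))).mul measurable_const)
  have hpt : ∀ s : ℝ, ENNReal.ofReal (-(deriv f s)) ≤ atTop.liminf (fun k => q k s) := by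
    intro s
    by_cases hd : DifferentiableAt ℝ f s
    · have hslope : Tendsto (slope f s) (nhdsWithin s {s}ᶜ) (nhds (deriv f s)) :=
        hasDerivAt_iff_tendsto_slope.mp hd.hasDerivAt
      have hseq : Tendsto (fun k : ℕ => s + ((k:ℝ)+1)⁻¹) atTop (nhdsWithin s {s}ᶜ) := by
        refine tendsto_nhdsWithin_of_tendsto_nhds_of_eventually_within _ ?_ ?_
        · have : Tendsto (fun k : ℕ => ((k:ℝ)+1)⁻¹) atTop (nhds 0) :=
            tendsto_one_div_add_atTop_nhds_zero_nat.congr (by intro k; rw [one_div])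
          simpa using tendsto_const_nhds.add this
        · filter_upwards with k
          simp only [mem_compl_iff, mem_singleton_iff]
          have : (0:ℝ) < ((k:ℝ)+1)⁻¹ := by positivity
          intro hcon
          nlinarith [hcon]
      have htend : Tendsto (fun k => q k s) atTop (nhds (ENNReal.ofReal (-(deriv f s)))) := by
        have h1 : Tendsto (fun k : ℕ => -(slope f s (s + ((k:ℝ)+1)⁻¹))) atTop
            (nhds (-(deriv f s))) := (hslope.comp hseq).neg
        have h2 : ∀ k : ℕ, (f s - f (s + ((k:ℝ)+1)⁻¹)) * ((k:ℝ)+1)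
            = -(slope f s (s + ((k:ℝ)+1)⁻¹)) := by
          intro k
          have hk : (0:ℝ) < ((k:ℝ)+1)⁻¹ := by positivity
          rw [slope_def_field]
          field_simp
          ring
        have h3 : Tendsto (fun k : ℕ => ENNReal.ofReal (-(slope f s (s + ((k:ℝ)+1)⁻¹))))
            atTop (nhds (ENNReal.ofReal (-(deriv f s)))) :=
          (ENNReal.continuous_ofReal.tendsto _).comp h1
        refine h3.congr fun k => ?_
        rw [hq]; simp only; rw [h2 k]
      exact htend.liminf_eq.symm.le
    · rw [deriv_zero_of_not_differentiableAt hd]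
      simp
  calc ∫⁻ s in Ici r, ENNReal.ofReal (-(deriv f s))
      ≤ ∫⁻ s in Ici r, atTop.liminf (fun k => q k s) := lintegral_mono hpt
    _ ≤ atTop.liminf (fun k => ∫⁻ s in Ici r, q k s) := lintegral_liminf_le hqm
    _ ≤ ENNReal.ofReal (f r) := by
        have hbd : ∀ k : ℕ, ∫⁻ s in Ici r, q k s ≤ ENNReal.ofReal (f r) := by
          intro k
          have hk : (0:ℝ) < ((k:ℝ)+1)⁻¹ := by positivity
          have e1 : ∀ s : ℝ, q k s = (F s - F (s + ((k:ℝ)+1)⁻¹)) * ENNReal.ofReal ((k:ℝ)+1) := by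
            intro s
            rw [hq]
            simp only
            rw [ENNReal.ofReal_mul' (by positivity), ENNReal.ofReal_sub _ (hf0 _)]
          calc ∫⁻ s in Ici r, q k s
              = (∫⁻ s in Ici r, (F s - F (s + ((k:ℝ)+1)⁻¹))) * ENNReal.ofReal ((k:ℝ)+1) := by
                simp_rw [e1]
                exact lintegral_mul_const _ ((hFm.sub (hFm.comp (measurable_add_const _))))
            _ ≤ (F r * ENNReal.ofReal (((k:ℝ)+1)⁻¹)) * ENNReal.ofReal ((k:ℝ)+1) :=
                mul_le_mul_left (key _ hk) _
            _ = F r * ENNReal.ofReal (((k:ℝ)+1)⁻¹ * ((k:ℝ)+1)) := by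
                rw [mul_assoc, ENNReal.ofReal_mul (by positivity)]
            _ = ENNReal.ofReal (f r) := by
                rw [inv_mul_cancel₀ (by positivity)]
                simp [hF]
        refine le_trans (liminf_le_liminf (Eventually.of_forall hbd)) ?_
        simp

lemma lemD (n : ℕ) (hn : 1 ≤ n) (f : ℝ → ℝ) {t : ℝ} (ht : 0 ≤ t) :
    (∫⁻ s in Ici (0:ℝ), ENNReal.ofReal (min s t ^ n) * ENNReal.ofReal (-(deriv f s)))
      = ∫⁻ r in Ioc (0:ℝ) t, ENNReal.ofReal ((n:ℝ) * r ^ (n-1))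
          * ∫⁻ s in Ici r, ENNReal.ofReal (-(deriv f s)) := by
  have lemA : ∀ c : ℝ, 0 ≤ c → (∫⁻ r in Ioc (0:ℝ) c, ENNReal.ofReal ((n : ℝ) * r ^ (n - 1)))
      = ENNReal.ofReal (c ^ n) := fun c hc => lemA n hn hc
  set w : ℝ → ENNReal := fun r => ENNReal.ofReal ((n:ℝ) * r ^ (n-1)) with hw
  set D : ℝ → ENNReal := fun s => ENNReal.ofReal (-(deriv f s)) with hD
  have hwm : Measurable w := ENNReal.measurable_ofReal.comp (by measurability)
  have hDm : Measurable D := ENNReal.measurable_ofReal.comp (measurable_deriv f).neg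
  set A : Set (ℝ × ℝ) := {p | 0 ≤ p.1 ∧ 0 < p.2 ∧ p.2 ≤ p.1 ∧ p.2 ≤ t} with hA
  have hAm : MeasurableSet A := by
    apply MeasurableSet.inter (measurableSet_le measurable_const measurable_fst)
    apply MeasurableSet.inter (measurableSet_lt measurable_const measurable_snd)
    exact (measurableSet_le measurable_snd measurable_fst).inter
      (measurableSet_le measurable_snd measurable_const)
  set K : ℝ × ℝ → ENNReal := fun p => A.indicator (fun q => w q.2 * D q.1) p with hK
  have hKm : Measurable K := (Measurable.mul (hwm.comp measurable_snd)
    (hDm.comp measurable_fst)).indicator hAm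
  have step1 : ∀ s ∈ Ici (0:ℝ), ENNReal.ofReal (min s t ^ n) * D s = ∫⁻ r, K (s, r) := by
    intro s hs
    have hms : (0:ℝ) ≤ min s t := le_min hs ht
    have hsec : (fun r => K (s, r)) = (Ioc 0 (min s t)).indicator (fun r => w r * D s) := by
      funext r
      by_cases hr : r ∈ Ioc 0 (min s t)
      · have hmem : (s, r) ∈ A := ⟨hs, hr.1, (le_min_iff.mp hr.2).1, (le_min_iff.mp hr.2).2⟩
        simp [hK, indicator_of_mem hmem, indicator_of_mem hr]
      · have hmem : (s, r) ∉ A := by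
          intro hc
          exact hr ⟨hc.2.1, le_min hc.2.2.1 hc.2.2.2⟩
        simp [hK, indicator_of_notMem hmem, indicator_of_notMem hr]
    rw [← lemA _ hms, ← lintegral_mul_const _ hwm, hsec,
      lintegral_indicator measurableSet_Ioc]
  calc ∫⁻ s in Ici (0:ℝ), ENNReal.ofReal (min s t ^ n) * D s
      = ∫⁻ s in Ici (0:ℝ), ∫⁻ r, K (s, r) := setLIntegral_congr_fun_ae measurableSet_Ici
        (Eventually.of_forall step1)
    _ = ∫⁻ s, ∫⁻ r, K (s, r) := by
        rw [← lintegral_indicator measurableSet_Ici]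
        congr 1
        funext s
        by_cases hs : s ∈ Ici (0:ℝ)
        · rw [indicator_of_mem hs]
        · rw [indicator_of_notMem hs]
          have hz : (fun r => K (s, r)) = fun _ => 0 := by
            funext r
            have : (s, r) ∉ A := fun hc => hs hc.1
            simp [hK, indicator_of_notMem this]
          rw [hz, lintegral_zero]
    _ = ∫⁻ r, ∫⁻ s, K (s, r) := lintegral_lintegral_swap hKm.aemeasurable
    _ = ∫⁻ r in Ioc (0:ℝ) t, w r * ∫⁻ s in Ici r, D s := by
        rw [← lintegral_indicator measurableSet_Ioc]
        congr 1
        funext r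
        by_cases hr : r ∈ Ioc (0:ℝ) t
        · rw [indicator_of_mem hr]
          have hsec2 : (fun s => K (s, r)) = (Ici r).indicator (fun s => w r * D s) := by
            funext s
            by_cases hsr : s ∈ Ici r
            · have hmem : (s, r) ∈ A := ⟨le_trans hr.1.le hsr, hr.1, hsr, hr.2⟩
              simp [hK, indicator_of_mem hmem, indicator_of_mem hsr]
            · have hmem : (s, r) ∉ A := fun hc => hsr hc.2.2.1
              simp [hK, indicator_of_notMem hmem, indicator_of_notMem hsr]
          rw [hsec2, lintegral_indicator measurableSet_Ici, lintegral_const_mul _ hDm]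
        · rw [indicator_of_notMem hr]
          have hz : (fun s => K (s, r)) = fun _ => 0 := by
            funext s
            have : (s, r) ∉ A := by
              intro hc
              exact hr ⟨hc.2.1, hc.2.2.2⟩
            simp [hK, indicator_of_notMem this]
          rw [hz, lintegral_zero]
def AntitoneOnIci (ρ : ℝ → ℝ) : Prop :=
  ∀ ⦃x y : ℝ⦄, 0 ≤ x → x ≤ y → ρ y ≤ ρ x

theorem stmt3 (n : ℕ) (hn : 1 ≤ n) (ρ : ℝ → ℝ) (hρ : ∀ r, 0 ≤ ρ r)
    (hlc : LogConcaveOnIci ρ) (hanti : AntitoneOnIci ρ)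
    (ν η τ : Measure ℝ)
    (hν : ν = (volume.restrict (Ici (0:ℝ))).withDensity
      (fun r => ENNReal.ofReal ((n : ℝ) * r ^ (n - 1) * ρ r)))
    (hη : η = (volume.restrict (Ici (0:ℝ))).withDensity
      (fun s => ENNReal.ofReal (-(s ^ n * deriv ρ s))))
    (hτ : τ = (volume.restrict (Icc (0:ℝ) 1)).withDensity
      (fun t => ENNReal.ofReal ((n : ℝ) * t ^ (n - 1))))
    (hνprob : IsProbabilityMeasure ν) (hηprob : IsProbabilityMeasure η) :
    (η.prod τ).map (fun p : ℝ × ℝ => p.1 * p.2) = ν := by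
  -- replace ρ by its globally antitone modification f
  set f : ℝ → ℝ := fun s => ρ (max s 0) with hfdef
  have hfanti : Antitone f := fun x y hxy =>
    hanti (le_max_right x 0) (max_le_max hxy le_rfl)
  have hf0 : ∀ x, 0 ≤ f x := fun x => hρ _
  have hfm : Measurable f := hfanti.measurable
  have hfeq : ∀ s : ℝ, 0 ≤ s → f s = ρ s := by
    intro s hs; rw [hfdef]; simp [max_eq_left hs]
  have hderiv_eq : ∀ s : ℝ, 0 < s → deriv f s = deriv ρ s := by
    intro s hs
    apply Filter.EventuallyEq.deriv_eq
    filter_upwards [IsOpen.mem_nhds isOpen_Ioi hs] with x hx using hfeq x (le_of_lt hx)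
  set w : ℝ → ENNReal := fun r => ENNReal.ofReal ((n:ℝ) * r ^ (n-1)) with hw
  set F0 : ℝ → ENNReal := fun r => ENNReal.ofReal (f r) with hF0
  set D : ℝ → ENNReal := fun s => ENNReal.ofReal (-(deriv f s)) with hD
  set G : ℝ → ENNReal := fun r => ∫⁻ s in Ici r, D s with hG
  have hwm : Measurable w :=
    ENNReal.measurable_ofReal.comp ((measurable_id.pow_const (n-1)).const_mul (n:ℝ))
  have hF0m : Measurable F0 := ENNReal.measurable_ofReal.comp hfm
  have hDm : Measurable D := ENNReal.measurable_ofReal.comp (measurable_deriv f).neg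
  have hGanti : Antitone G := fun x y hxy => lintegral_mono_set (Ici_subset_Ici.2 hxy)
  have hGm : Measurable G := hGanti.measurable
  -- clean forms of the measures
  have hν' : ν = (volume.restrict (Ici (0:ℝ))).withDensity (fun r => w r * F0 r) := by
    rw [hν]
    apply withDensity_congr_ae
    filter_upwards [ae_restrict_mem measurableSet_Ici] with r hr
    rw [hF0]; simp only; rw [hfeq r hr, ENNReal.ofReal_mul (mul_nonneg (Nat.cast_nonneg n) (pow_nonneg hr _))]
  have hae_ne : ∀ᵐ s ∂(volume.restrict (Ici (0:ℝ))), s ≠ 0 := by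
    refine ae_iff.2 ?_
    have : {a : ℝ | ¬ a ≠ 0} = {0} := by ext a; simp
    rw [this]
    exact le_antisymm ((Measure.restrict_apply_le _ _).trans (by simp)) zero_le
  have hη' : η = (volume.restrict (Ici (0:ℝ))).withDensity
      (fun s => ENNReal.ofReal (s^n) * D s) := by
    rw [hη]
    apply withDensity_congr_ae
    filter_upwards [ae_restrict_mem measurableSet_Ici, hae_ne] with s hs hs0
    have hspos : 0 < s := lt_of_le_of_ne hs (Ne.symm hs0)
    rw [hD]; simp only; rw [← hderiv_eq s hspos]
    have : -(s ^ n * deriv f s) = s ^ n * (-(deriv f s)) := by ring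
    rw [this, ENNReal.ofReal_mul (pow_nonneg hs n)]
  haveI hτ' : IsProbabilityMeasure τ := by rw [hτ]; exact lemB' n hn
  have htotν : ∫⁻ r in Ici (0:ℝ), w r * F0 r = 1 := by
    have h1 := hνprob.measure_univ
    rw [hν', withDensity_apply _ MeasurableSet.univ, Measure.restrict_univ] at h1
    exact h1
  have htotη : ∫⁻ s in Ici (0:ℝ), ENNReal.ofReal (s^n) * D s = 1 := by
    have h1 := hηprob.measure_univ
    rw [hη', withDensity_apply _ MeasurableSet.univ, Measure.restrict_univ] at h1
    exact h1
  -- integrability of F0 on [0,∞)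
  have hfin : ∫⁻ s in Ici (0:ℝ), F0 s ≠ ⊤ := by
    have hsub : Ici (0:ℝ) ⊆ Icc 0 1 ∪ Ioi 1 := by
      intro x hx
      by_cases h1 : x ≤ 1
      · exact Or.inl ⟨hx, h1⟩
      · exact Or.inr (lt_of_not_ge h1)
    have hb1 : ∫⁻ s in Icc (0:ℝ) 1, F0 s ≤ ENNReal.ofReal (f 0) := by
      calc ∫⁻ s in Icc (0:ℝ) 1, F0 s ≤ ∫⁻ _ in Icc (0:ℝ) 1, ENNReal.ofReal (f 0) :=
            setLIntegral_mono measurable_const fun s hs =>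
              ENNReal.ofReal_le_ofReal (hfanti hs.1)
        _ = ENNReal.ofReal (f 0) * volume (Icc (0:ℝ) 1) := setLIntegral_const _ _
        _ ≤ ENNReal.ofReal (f 0) := by simp [Real.volume_Icc]
    have hb2 : ∫⁻ s in Ioi (1:ℝ), F0 s ≤ 1 := by
      calc ∫⁻ s in Ioi (1:ℝ), F0 s ≤ ∫⁻ s in Ioi (1:ℝ), w s * F0 s := by
            refine setLIntegral_mono (hwm.mul hF0m) fun s hs => ?_
            conv_lhs => rw [← one_mul (F0 s)]
            refine mul_le_mul_left ?_ _
            rw [hw]; simp only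
            rw [← ENNReal.ofReal_one]
            refine ENNReal.ofReal_le_ofReal ?_
            have hs1 : (1:ℝ) ≤ s := le_of_lt hs
            have : (1:ℝ) ≤ s ^ (n-1) := one_le_pow₀ hs1
            have hn1 : (1:ℝ) ≤ (n:ℝ) := by exact_mod_cast hn
            nlinarith
        _ ≤ ∫⁻ s in Ici (0:ℝ), w s * F0 s :=
            lintegral_mono_set fun x hx => mem_Ici.2 (le_of_lt (lt_of_le_of_lt zero_le_one hx))
        _ = 1 := htotν
    intro htop
    have : (⊤ : ENNReal) ≤ ENNReal.ofReal (f 0) + 1 := by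
      calc (⊤ : ENNReal) = ∫⁻ s in Ici (0:ℝ), F0 s := htop.symm
        _ ≤ ∫⁻ s in Icc (0:ℝ) 1 ∪ Ioi 1, F0 s := lintegral_mono_set hsub
        _ ≤ (∫⁻ s in Icc (0:ℝ) 1, F0 s) + ∫⁻ s in Ioi (1:ℝ), F0 s := lintegral_union_le _ _ _
        _ ≤ ENNReal.ofReal (f 0) + 1 := add_le_add hb1 hb2
    exact absurd this (by simp [lt_top_iff_ne_top, ENNReal.add_lt_top])
  have hGle : ∀ r : ℝ, 0 ≤ r → G r ≤ F0 r := fun r hr => lemC f hfanti hf0 hfin hr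
  -- monotone convergence: total mass of w * G on (0,∞) is 1
  have htotG : ∫⁻ r in Ioi (0:ℝ), w r * G r = 1 := by
    have hΦ : ∀ k : ℕ, (∫⁻ s in Ici (0:ℝ), ENNReal.ofReal (min s (k:ℝ) ^ n) * D s)
        = ∫⁻ r in Ioc (0:ℝ) (k:ℝ), w r * G r := fun k => lemD n hn f (Nat.cast_nonneg k)
    have hL : Filter.Tendsto
        (fun k : ℕ => ∫⁻ s in Ici (0:ℝ), ENNReal.ofReal (min s (k:ℝ) ^ n) * D s)
        atTop (nhds (∫⁻ s in Ici (0:ℝ), ENNReal.ofReal (s^n) * D s)) := by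
      apply lintegral_tendsto_of_tendsto_of_monotone
      · intro k
        exact ((ENNReal.measurable_ofReal.comp
          ((measurable_id.min measurable_const).pow_const n)).mul hDm).aemeasurable
      · filter_upwards [ae_restrict_mem measurableSet_Ici] with s hs
        intro k k' hkk'
        refine mul_le_mul_left (ENNReal.ofReal_le_ofReal ?_) _
        refine pow_le_pow_left₀ (le_min hs (Nat.cast_nonneg k)) ?_ n
        exact min_le_min le_rfl (by exact_mod_cast hkk')
      · filter_upwards [ae_restrict_mem measurableSet_Ici] with s hs
        have hev : ∀ᶠ k : ℕ in atTop, ENNReal.ofReal (min s (k:ℝ) ^ n) * D s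
            = ENNReal.ofReal (s ^ n) * D s := by
          obtain ⟨K, hK⟩ := exists_nat_ge s
          filter_upwards [Filter.eventually_ge_atTop K] with k hk
          have : s ≤ (k:ℝ) := le_trans hK (by exact_mod_cast hk)
          rw [min_eq_left this]
        exact tendsto_const_nhds.congr' (hev.mono fun k hk => hk.symm)
    have hR : Filter.Tendsto (fun k : ℕ => ∫⁻ r in Ioc (0:ℝ) (k:ℝ), w r * G r)
        atTop (nhds (∫⁻ r in Ioi (0:ℝ), w r * G r)) := by
      have he1 : ∀ k : ℕ, (∫⁻ r in Ioc (0:ℝ) (k:ℝ), w r * G r)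
          = ∫⁻ r, (Ioc (0:ℝ) (k:ℝ)).indicator (fun r => w r * G r) r :=
        fun k => (lintegral_indicator measurableSet_Ioc _).symm
      have he2 : (∫⁻ r in Ioi (0:ℝ), w r * G r)
          = ∫⁻ r, (Ioi (0:ℝ)).indicator (fun r => w r * G r) r :=
        (lintegral_indicator measurableSet_Ioi _).symm
      simp_rw [he1, he2]
      apply lintegral_tendsto_of_tendsto_of_monotone
      · intro k
        exact ((hwm.mul hGm).indicator measurableSet_Ioc).aemeasurable
      · filter_upwards with r
        intro k k' hkk'
        refine indicator_le_indicator_of_subset (Ioc_subset_Ioc_right (by exact_mod_cast hkk')) (fun _ => zero_le) r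
      · filter_upwards with r
        by_cases hr : r ∈ Ioi (0:ℝ)
        · have hev : ∀ᶠ k : ℕ in atTop, (Ioc (0:ℝ) (k:ℝ)).indicator (fun r => w r * G r) r
              = (Ioi (0:ℝ)).indicator (fun r => w r * G r) r := by
            obtain ⟨K, hK⟩ := exists_nat_ge r
            filter_upwards [Filter.eventually_ge_atTop K] with k hk
            have hrk : r ≤ (k:ℝ) := le_trans hK (by exact_mod_cast hk)
            rw [indicator_of_mem (mem_Ioc.mpr ⟨hr, hrk⟩), indicator_of_mem hr]
          exact tendsto_const_nhds.congr' (hev.mono fun k hk => hk.symm)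
        · have : ∀ k : ℕ, (Ioc (0:ℝ) (k:ℝ)).indicator (fun r => w r * G r) r = 0 :=
            fun k => indicator_of_notMem (fun hc => hr hc.1) _
          simp_rw [this, indicator_of_notMem hr]
          exact tendsto_const_nhds
    have := tendsto_nhds_unique (hL.congr (fun k => hΦ k)) hR
    rw [← this, htotη]
  have htotν' : ∫⁻ r in Ioi (0:ℝ), w r * F0 r = 1 := by
    rw [← htotν]
    exact setLIntegral_congr Ioi_ae_eq_Ici
  -- a.e. equality of w*G and w*F0 on (0,∞)
  have haeGF : (fun r => w r * G r) =ᵐ[volume.restrict (Ioi (0:ℝ))] fun r => w r * F0 r := by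
    have hle : (fun r => w r * G r) ≤ᵐ[volume.restrict (Ioi (0:ℝ))] fun r => w r * F0 r := by
      filter_upwards [ae_restrict_mem measurableSet_Ioi] with r hr
      exact mul_le_mul_right (hGle r (le_of_lt hr)) _
    have hsub : ∫⁻ r in Ioi (0:ℝ), (w r * F0 r - w r * G r) = 0 := by
      rw [lintegral_sub (g := fun r => w r * G r) (hwm.mul hGm) (by rw [htotG]; exact ENNReal.one_ne_top) hle, htotν', htotG,
        tsub_self]
    have h0 := (lintegral_eq_zero_iff ((hwm.mul hF0m).sub (hwm.mul hGm))).mp hsub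
    filter_upwards [h0, hle] with r h1 h2
    exact le_antisymm h2 (tsub_eq_zero_iff_le.mp h1)
  -- conclude via CDFs
  have hmeasmul : Measurable fun p : ℝ × ℝ => p.1 * p.2 := measurable_fst.mul measurable_snd
  haveI : IsProbabilityMeasure ((η.prod τ).map fun p : ℝ × ℝ => p.1 * p.2) :=
    Measure.isProbabilityMeasure_map hmeasmul.aemeasurable
  have hsnm : Measurable fun s : ℝ => ENNReal.ofReal (s ^ n) * D s :=
    (ENNReal.measurable_ofReal.comp (measurable_id.pow_const n)).mul hDm
  refine Measure.ext_of_Iic _ _ fun t => ?_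
  rw [Measure.map_apply hmeasmul measurableSet_Iic,
    Measure.prod_apply (hmeasmul measurableSet_Iic), hη',
    lintegral_withDensity_eq_lintegral_mul_non_measurable _ hsnm
      (Filter.Eventually.of_forall fun s => ENNReal.mul_lt_top ENNReal.ofReal_lt_top
        ENNReal.ofReal_lt_top)]
  have hνIic : ν (Iic t) = ∫⁻ r in Iic t ∩ Ici (0:ℝ), w r * F0 r := by
    rw [hν', withDensity_apply _ measurableSet_Iic,
      Measure.restrict_restrict measurableSet_Iic]
  by_cases hts : 0 ≤ t
  · -- main case
    have hstep : ∀ s : ℝ, s ∈ Ioi (0:ℝ) →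
        ((fun s => ENNReal.ofReal (s^n) * D s) * fun s =>
          τ (Prod.mk s ⁻¹' ((fun p : ℝ × ℝ => p.1 * p.2) ⁻¹' Iic t))) s
        = ENNReal.ofReal (min s t ^ n) * D s := by
      intro s hs
      have hs' : (0:ℝ) < s := hs
      have hset : (Prod.mk s ⁻¹' ((fun p : ℝ × ℝ => p.1 * p.2) ⁻¹' Iic t)) = Iic (t / s) := by
        ext u
        simp only [mem_preimage, mem_Iic]
        rw [le_div_iff₀ hs', mul_comm]
      have hτval : τ (Iic (t / s)) = ENNReal.ofReal (min (t / s) 1 ^ n) := by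
        rw [hτ]; exact lemB n hn (div_nonneg hts (le_of_lt hs'))
      simp only [Pi.mul_apply]
      rw [hset, hτval]
      rw [mul_right_comm, ← ENNReal.ofReal_mul (by positivity), ← mul_pow]
      congr 3
      rw [mul_min_of_nonneg _ _ (le_of_lt hs'), mul_div_cancel₀ _ (ne_of_gt hs'), mul_one,
        min_comm]
    calc ∫⁻ s in Ici (0:ℝ), ((fun s => ENNReal.ofReal (s^n) * D s) * fun s =>
          τ (Prod.mk s ⁻¹' ((fun p : ℝ × ℝ => p.1 * p.2) ⁻¹' Iic t))) s
        = ∫⁻ s in Ioi (0:ℝ), ((fun s => ENNReal.ofReal (s^n) * D s) * fun s =>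
          τ (Prod.mk s ⁻¹' ((fun p : ℝ × ℝ => p.1 * p.2) ⁻¹' Iic t))) s :=
          (setLIntegral_congr Ioi_ae_eq_Ici).symm
      _ = ∫⁻ s in Ioi (0:ℝ), ENNReal.ofReal (min s t ^ n) * D s :=
          setLIntegral_congr_fun_ae measurableSet_Ioi (Filter.Eventually.of_forall hstep)
      _ = ∫⁻ s in Ici (0:ℝ), ENNReal.ofReal (min s t ^ n) * D s :=
          setLIntegral_congr Ioi_ae_eq_Ici
      _ = ∫⁻ r in Ioc (0:ℝ) t, w r * G r := lemD n hn f hts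
      _ = ∫⁻ r in Ioc (0:ℝ) t, w r * F0 r := by
          refine lintegral_congr_ae ?_
          exact ae_restrict_of_ae_restrict_of_subset Ioc_subset_Ioi_self haeGF
      _ = ν (Iic t) := by
          rw [hνIic]
          have : Iic t ∩ Ici (0:ℝ) = Icc 0 t := by
            ext x; simp [mem_Icc, and_comm]
          rw [this]
          exact setLIntegral_congr Ioc_ae_eq_Icc
  · -- t < 0 : both sides vanish
    push_neg at hts
    have hτ0 : ∀ s : ℝ, s ∈ Ici (0:ℝ) →
        τ (Prod.mk s ⁻¹' ((fun p : ℝ × ℝ => p.1 * p.2) ⁻¹' Iic t)) = 0 := by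
      intro s hs
      have hmeas : MeasurableSet {u : ℝ | s * u ≤ t} :=
        measurableSet_le (measurable_const_mul s) measurable_const
      have hsetp : (Prod.mk s ⁻¹' ((fun p : ℝ × ℝ => p.1 * p.2) ⁻¹' Iic t))
          = {u : ℝ | s * u ≤ t} := rfl
      rw [hsetp, hτ, withDensity_apply _ hmeas, Measure.restrict_restrict hmeas]
      have : {u : ℝ | s * u ≤ t} ∩ Icc (0:ℝ) 1 = ∅ := by
        ext u
        simp only [mem_inter_iff, mem_setOf_eq, mem_Icc, mem_empty_iff_false, iff_false]
        rintro ⟨h1, h2, h3⟩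
        have hs0 : (0:ℝ) ≤ s := hs
        nlinarith [mul_nonneg hs0 h2]
      rw [this]
      simp
    have hz : ∫⁻ s in Ici (0:ℝ), ((fun s => ENNReal.ofReal (s^n) * D s) * fun s =>
        τ (Prod.mk s ⁻¹' ((fun p : ℝ × ℝ => p.1 * p.2) ⁻¹' Iic t))) s = 0 := by
      rw [setLIntegral_congr_fun_ae measurableSet_Ici
        (Filter.Eventually.of_forall (fun s hs => by
          simp only [Pi.mul_apply]
          rw [hτ0 s hs, mul_zero] : ∀ s ∈ Ici (0:ℝ), _ = (0:ENNReal)))]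
      simp
    rw [hz, hνIic]
    have : Iic t ∩ Ici (0:ℝ) = ∅ := by
      ext x
      simp only [mem_inter_iff, mem_Iic, mem_Ici, mem_empty_iff_false, iff_false]
      rintro ⟨h1, h2⟩
      linarith
    rw [this]
    simp
end
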